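/- For every integer r ≥ 0, the matrix M_r is positive semidefinite. -/

import Mathlib

/-- The matrix `M_r`, indexed by subsets `S, T ⊆ [r]`, with entry
`C(|S ∩ T|, 2) + C(|Sᶜ ∩ Tᶜ|, 2)`. -/
def Mmat (r : ℕ) : Matrix (Finset (Fin r)) (Finset (Fin r)) ℝ :=
  fun S T => ((S ∩ T).card.choose 2 : ℝ) + ((Sᶜ ∩ Tᶜ).card.choose 2 : ℝ)

lemma choose_eq_filter (r : ℕ) (S T : Finset (Fin r)) :
    ((S ∩ T).card.choose 2 : ℝ) =
      ((Finset.univ.filter (fun P : Finset (Fin r) => P.card = 2 ∧ P ⊆ S ∧ P ⊆ T)).card : ℝ) := by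
  rw [← Finset.card_powersetCard 2 (S ∩ T)]
  congr 1
  apply Finset.card_bij (fun P _ => P)
  · intro P hP
    simp only [Finset.mem_powersetCard, Finset.subset_inter_iff] at hP
    simp [hP.1.1, hP.1.2, hP.2]
  · intro a ha b hb h; exact h
  · intro P hP
    simp only [Finset.mem_filter, Finset.mem_univ, true_and] at hP
    exact ⟨P, by simp [Finset.mem_powersetCard, Finset.subset_inter_iff, hP.1, hP.2.1, hP.2.2], rfl⟩

/-- For every integer `r ≥ 0`, the matrix `M_r` is positive semidefinite. -/
theorem Mmat_posSemidef (r : ℕ) : (Mmat r).PosSemidef := by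
  set B : Matrix (Finset (Fin r)) (Finset (Fin r) × Bool) ℝ :=
    fun S p => if p.1.card = 2 ∧ p.1 ⊆ (if p.2 then S else Sᶜ) then 1 else 0 with hB
  have h : Mmat r = B * B.conjTranspose := by
    ext S T
    simp only [Matrix.mul_apply, Matrix.conjTranspose_apply, star_trivial]
    simp only [Matrix.mul_apply, Matrix.conjTranspose_apply, hB, star_trivial]
    rw [Fintype.sum_prod_type_right]
    simp only [Fintype.sum_bool, Bool.false_eq_true, if_true, if_false]
    have key : ∀ (A C : Finset (Fin r)),
        (∑ P : Finset (Fin r), (if P.card = 2 ∧ P ⊆ A then (1:ℝ) else 0) *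
          (if P.card = 2 ∧ P ⊆ C then (1:ℝ) else 0)) = ((A ∩ C).card.choose 2 : ℝ) := by
      intro A C
      rw [choose_eq_filter r A C, Finset.card_filter]
      push_cast
      apply Finset.sum_congr rfl
      intro P _
      by_cases hc : P.card = 2
      · by_cases ha : P ⊆ A <;> by_cases hC : P ⊆ C <;> simp [hc, ha, hC]
      · simp [hc]
    rw [key S T, key Sᶜ Tᶜ]
    simp [Mmat, add_comm]
  rw [h]
  exact Matrix.posSemidef_self_mul_conjTranspose B
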